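/- Let 𝔥 : ℝ² → ℝ be continuous, positively 1-homogeneous, symmetric (𝔥(−v) = 𝔥(v) for all v), with 𝔥(ν) > 0 for ν ≠ 0, continuously differentiable on ℝ² \ {0}, and strictly convex in the sense that 𝔥(tν + (1−t)μ) < t·𝔥(ν) + (1−t)·𝔥(μ) for every t ∈ (0,1) and all vectors ν, μ which are not positively parallel. Then for every point A with 𝔥(A) = 1 there exists exactly one unordered pair {B, C} of points with 𝔥(B) = 𝔥(C) = 1 such that ∇𝔥(A) + ∇𝔥(B) + ∇𝔥(C) = 0; that is, such a pair B, C exists, and whenever B', C' satisfy 𝔥(B') = 𝔥(C') = 1 and ∇𝔥(A) + ∇𝔥(B') + ∇𝔥(C') = 0, one has {B', C'} = {B, C}. -/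

import Mathlib

open Set Filter InnerProductSpace
open scoped RealInnerProductSpace Topology

local notation "E2" => EuclideanSpace ℝ (Fin 2)




noncomputable def st6perp (x : E2) : E2 := (WithLp.equiv 2 (Fin 2 → ℝ)).symm ![-(x 1), x 0]

@[simp] lemma st6perp_apply0 (x : E2) : st6perp x 0 = -(x 1) := rfl
@[simp] lemma st6perp_apply1 (x : E2) : st6perp x 1 = x 0 := rfl

lemma st6_inner_coords (x y : E2) : ⟪x, y⟫_ℝ = x 0 * y 0 + x 1 * y 1 := by
  simp [PiLp.inner_apply, Fin.sum_univ_two, RCLike.inner_apply]; ring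

lemma st6_inner_perp_self (x : E2) : ⟪x, st6perp x⟫_ℝ = 0 := by
  rw [st6_inner_coords]; simp; ring

lemma st6_perp_smul (c : ℝ) (x : E2) : st6perp (c • x) = c • st6perp x := by
  ext i
  fin_cases i <;> simp [st6perp]

lemma st6_perp_norm (x : E2) : ‖st6perp x‖ = ‖x‖ := by
  have h1 : ⟪st6perp x, st6perp x⟫_ℝ = ⟪x, x⟫_ℝ := by
    rw [st6_inner_coords, st6_inner_coords]; simp; ring
  have h2 := real_inner_self_eq_norm_sq (st6perp x)
  have h3 := real_inner_self_eq_norm_sq x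
  nlinarith [norm_nonneg (st6perp x), norm_nonneg x]

lemma st6_expand {e : E2} (he : ‖e‖ = 1) (w : E2) :
    w = ⟪w, e⟫_ℝ • e + ⟪w, st6perp e⟫_ℝ • st6perp e := by
  have he2 : e 0 ^ 2 + e 1 ^ 2 = 1 := by
    have := real_inner_self_eq_norm_sq e
    rw [st6_inner_coords, he] at this
    nlinarith
  ext i
  fin_cases i
  · simp only [st6_inner_coords, PiLp.add_apply, PiLp.smul_apply, smul_eq_mul,
      st6perp_apply0, st6perp_apply1, Fin.isValue, Fin.mk_zero, Fin.mk_one]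
    linear_combination (-(w 0)) * he2
  · simp only [st6_inner_coords, PiLp.add_apply, PiLp.smul_apply, smul_eq_mul,
      st6perp_apply0, st6perp_apply1, Fin.isValue, Fin.mk_zero, Fin.mk_one]
    linear_combination (-(w 1)) * he2

lemma st6_coord_ext {e : E2} (he : ‖e‖ = 1) {a b : E2}
    (h1 : ⟪a, e⟫_ℝ = ⟪b, e⟫_ℝ) (h2 : ⟪a, st6perp e⟫_ℝ = ⟪b, st6perp e⟫_ℝ) : a = b := by
  rw [st6_expand he a, st6_expand he b, h1, h2]

noncomputable def st6N (𝔥 : E2 → ℝ) (x : E2) : ℝ :=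
  sSup ((fun u => ⟪x, u⟫_ℝ) '' {u | 𝔥 u = 1})


section st6
variable {𝔥 : E2 → ℝ}

lemma st6_zero (h_homog : ∀ c : ℝ, 0 ≤ c → ∀ v, 𝔥 (c • v) = c * 𝔥 v) : 𝔥 0 = 0 := by
  have := h_homog 0 le_rfl 0
  simpa using this

lemma st6_ne_zero (h_homog : ∀ c : ℝ, 0 ≤ c → ∀ v, 𝔥 (c • v) = c * 𝔥 v)
    {v : E2} (hv : 𝔥 v = 1) : v ≠ 0 := by
  intro h; rw [h, st6_zero h_homog] at hv; norm_num at hv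

lemma st6_grad (h_C1 : ContDiffOn ℝ 1 𝔥 {(0 : E2)}ᶜ) {v : E2} (hv : v ≠ 0) :
    HasGradientAt 𝔥 (gradient 𝔥 v) v := by
  have : DifferentiableAt ℝ 𝔥 v :=
    (h_C1.differentiableOn one_ne_zero).differentiableAt
      (isOpen_compl_singleton.mem_nhds (by simpa using hv))
  exact this.hasGradientAt

/-- derivative of `t ↦ 𝔥 (v + t • w)` at `t = t₀`, provided `v + t₀ • w ≠ 0`. -/
lemma st6_deriv_line (h_C1 : ContDiffOn ℝ 1 𝔥 {(0 : E2)}ᶜ) {v w : E2} {t₀ : ℝ}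
    (hv : v + t₀ • w ≠ 0) :
    HasDerivAt (fun t : ℝ => 𝔥 (v + t • w)) ⟪gradient 𝔥 (v + t₀ • w), w⟫_ℝ t₀ := by
  have hg := (st6_grad h_C1 hv).hasFDerivAt
  have hline : HasDerivAt (fun t : ℝ => v + t • w) w t₀ := by
    simpa using ((hasDerivAt_id t₀).smul_const w).const_add v
  have := hg.comp_hasDerivAt t₀ hline
  exact this

lemma st6_euler (h_homog : ∀ c : ℝ, 0 ≤ c → ∀ v, 𝔥 (c • v) = c * 𝔥 v)
    (h_C1 : ContDiffOn ℝ 1 𝔥 {(0 : E2)}ᶜ) {v : E2} (hv : v ≠ 0) :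
    ⟪gradient 𝔥 v, v⟫_ℝ = 𝔥 v := by
  have h1 : HasDerivAt (fun t : ℝ => 𝔥 ((0 : E2) + t • v)) ⟪gradient 𝔥 ((0:E2) + (1:ℝ) • v), v⟫_ℝ 1 := by
    apply st6_deriv_line h_C1; simpa using hv
  simp only [zero_add, one_smul] at h1
  have h2 : HasDerivAt (fun t : ℝ => 𝔥 (t • v)) (𝔥 v) 1 := by
    have h3 : HasDerivAt (fun t : ℝ => t * 𝔥 v) (𝔥 v) 1 := by
      simpa using (hasDerivAt_id (1:ℝ)).mul_const (𝔥 v)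
    apply h3.congr_of_eventuallyEq
    filter_upwards [eventually_gt_nhds (show (0:ℝ) < 1 by norm_num)] with t ht
    rw [h_homog t ht.le]
  exact h1.unique h2

lemma st6_convex (h_homog : ∀ c : ℝ, 0 ≤ c → ∀ v, 𝔥 (c • v) = c * 𝔥 v)
    (h_strict : ∀ t ∈ Set.Ioo (0:ℝ) 1, ∀ ν μ : E2,
      ¬ ((∃ l : ℝ, 0 ≤ l ∧ ν = l • μ) ∨ (∃ l : ℝ, 0 ≤ l ∧ μ = l • ν)) →
      𝔥 (t • ν + (1 - t) • μ) < t * 𝔥 ν + (1 - t) * 𝔥 μ) :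
    ConvexOn ℝ univ 𝔥 := by
  refine ⟨convex_univ, ?_⟩
  rintro x - y - a b ha hb hab
  rcases eq_or_lt_of_le ha with rfl | ha'
  · simp at hab; subst hab; simp
  rcases eq_or_lt_of_le hb with rfl | hb'
  · have : a = 1 := by linarith
    subst this; simp
  have hb1 : b = 1 - a := by linarith
  subst hb1
  by_cases hpar : (∃ l : ℝ, 0 ≤ l ∧ x = l • y) ∨ (∃ l : ℝ, 0 ≤ l ∧ y = l • x)
  · rcases hpar with ⟨l, hl, rfl⟩ | ⟨l, hl, rfl⟩
    · have : a • l • y + (1-a) • y = (a * l + (1 - a)) • y := by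
        rw [add_smul, smul_smul, mul_smul]
      rw [this, h_homog _ (by nlinarith) y, h_homog _ hl y]; simp only [smul_eq_mul]; nlinarith [sq_nonneg 1]
    · have : a • x + (1-a) • l • x = (a + (1 - a) * l) • x := by
        rw [add_smul, smul_smul]
      rw [this, h_homog _ (by nlinarith) x, h_homog _ hl x]; simp only [smul_eq_mul]; nlinarith [sq_nonneg 1]
  · exact (h_strict a ⟨ha', by linarith⟩ x y hpar).le



variable {𝔥 : E2 → ℝ}

lemma st6_subgrad (hconv : ConvexOn ℝ Set.univ 𝔥)
    (h_homog : ∀ c : ℝ, 0 ≤ c → ∀ v, 𝔥 (c • v) = c * 𝔥 v)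
    (h_C1 : ContDiffOn ℝ 1 𝔥 {(0 : E2)}ᶜ) {v : E2} (hv : v ≠ 0) (u : E2) :
    ⟪gradient 𝔥 v, u⟫_ℝ ≤ 𝔥 u := by
  set g : ℝ → ℝ := fun t => 𝔥 (v + t • (u - v)) with hg
  have hd : HasDerivAt g ⟪gradient 𝔥 v, u - v⟫_ℝ 0 := by
    have := st6_deriv_line h_C1 (v := v) (w := u - v) (t₀ := 0) (by simpa using hv)
    simpa using this
  -- slope bound from convexity
  have hslope : ∀ t : ℝ, t ∈ Set.Ioo (0:ℝ) 1 → (g t - g 0) / t ≤ 𝔥 u - 𝔥 v := by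
    intro t ht
    have h1 : g t ≤ (1 - t) * 𝔥 v + t * 𝔥 u := by
      have := hconv.2 (Set.mem_univ v) (Set.mem_univ u)
        (by linarith [ht.2] : (0:ℝ) ≤ 1 - t) ht.1.le (by ring)
      have heq : v + t • (u - v) = (1-t) • v + t • u := by module
      rw [hg]; simp only [heq]
      simpa [smul_eq_mul] using this
    have hg0 : g 0 = 𝔥 v := by simp [hg]
    rw [div_le_iff₀ ht.1]
    nlinarith [ht.1]
  have hlim : Tendsto (fun t => (g t - g 0) / t) (𝓝[>] (0:ℝ)) (𝓝 ⟪gradient 𝔥 v, u - v⟫_ℝ) := by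
    have := hasDerivAt_iff_tendsto_slope.mp hd
    have h2 : 𝓝[>] (0:ℝ) ≤ 𝓝[≠] (0:ℝ) :=
      nhdsWithin_mono _ (fun x hx => ne_of_gt hx)
    have := this.mono_left h2
    refine this.congr (fun t => ?_)
    simp [slope_def_field]
  have hle : ⟪gradient 𝔥 v, u - v⟫_ℝ ≤ 𝔥 u - 𝔥 v := by
    refine le_of_tendsto hlim ?_
    filter_upwards [Ioo_mem_nhdsGT_of_mem (by norm_num : (0:ℝ) ∈ Set.Ico (0:ℝ) 1)] with t ht
    exact hslope t ht
  have heuler := st6_euler h_homog h_C1 hv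
  rw [inner_sub_right] at hle
  linarith

lemma st6_subgrad_strict (hconv : ConvexOn ℝ Set.univ 𝔥)
    (h_homog : ∀ c : ℝ, 0 ≤ c → ∀ v, 𝔥 (c • v) = c * 𝔥 v)
    (h_C1 : ContDiffOn ℝ 1 𝔥 {(0 : E2)}ᶜ)
    (h_strict : ∀ t ∈ Set.Ioo (0:ℝ) 1, ∀ ν μ : E2,
      ¬ ((∃ l : ℝ, 0 ≤ l ∧ ν = l • μ) ∨ (∃ l : ℝ, 0 ≤ l ∧ μ = l • ν)) →
      𝔥 (t • ν + (1 - t) • μ) < t * 𝔥 ν + (1 - t) * 𝔥 μ)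
    {v u : E2} (hv : v ≠ 0)
    (hnp : ¬ ((∃ l : ℝ, 0 ≤ l ∧ v = l • u) ∨ (∃ l : ℝ, 0 ≤ l ∧ u = l • v))) :
    ⟪gradient 𝔥 v, u⟫_ℝ < 𝔥 u := by
  have h1 : 𝔥 ((1/2 : ℝ) • v + (1/2 : ℝ) • u) < (1/2) * 𝔥 v + (1/2) * 𝔥 u := by
    have := h_strict (1/2) (by norm_num) v u hnp
    norm_num at this ⊢
    convert this using 3 <;> norm_num
  have h2 : ⟪gradient 𝔥 v, (1/2 : ℝ) • v + (1/2 : ℝ) • u⟫_ℝ ≤ 𝔥 ((1/2 : ℝ) • v + (1/2 : ℝ) • u) :=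
    st6_subgrad hconv h_homog h_C1 hv _
  have heuler := st6_euler h_homog h_C1 hv
  rw [inner_add_right, real_inner_smul_right, real_inner_smul_right] at h2
  linarith



/-- lower bound: `c * ‖u‖ ≤ 𝔥 u`. -/
lemma st6_lower (h_cont : Continuous 𝔥)
    (h_homog : ∀ c : ℝ, 0 ≤ c → ∀ v, 𝔥 (c • v) = c * 𝔥 v)
    (h_pos : ∀ v : E2, v ≠ 0 → 0 < 𝔥 v) :
    ∃ c : ℝ, 0 < c ∧ ∀ u : E2, c * ‖u‖ ≤ 𝔥 u := by
  obtain ⟨u₀, hu₀, hmin⟩ :=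
    (isCompact_sphere (0:E2) 1).exists_isMinOn
      (⟨EuclideanSpace.single 0 1, by simp⟩)
      (h_cont.continuousOn)
  refine ⟨𝔥 u₀, h_pos u₀ (by
    intro h; rw [h] at hu₀; simp at hu₀), ?_⟩
  intro u
  rcases eq_or_ne u 0 with rfl | hu
  · simp [st6_zero h_homog]
  · have hn : (0:ℝ) < ‖u‖ := norm_pos_iff.mpr hu
    have hsphere : ‖u‖⁻¹ • u ∈ Metric.sphere (0:E2) 1 := by
      simp [norm_smul, abs_of_pos (inv_pos.mpr hn), inv_mul_cancel₀ hn.ne']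
    have := hmin hsphere
    have heq : 𝔥 u = ‖u‖ * 𝔥 (‖u‖⁻¹ • u) := by
      rw [← h_homog ‖u‖ hn.le, smul_smul, mul_inv_cancel₀ hn.ne', one_smul]
    rw [heq, mul_comm (𝔥 u₀)]
    exact mul_le_mul_of_nonneg_left this hn.le



lemma st6_sph_compact (h_cont : Continuous 𝔥)
    (h_homog : ∀ c : ℝ, 0 ≤ c → ∀ v, 𝔥 (c • v) = c * 𝔥 v)
    (h_pos : ∀ v : E2, v ≠ 0 → 0 < 𝔥 v) :
    IsCompact {u : E2 | 𝔥 u = 1} := by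
  obtain ⟨c, hc, hlow⟩ := st6_lower h_cont h_homog h_pos
  rw [Metric.isCompact_iff_isClosed_bounded]
  constructor
  · exact isClosed_eq h_cont continuous_const
  · apply Metric.isBounded_iff_subset_closedBall (0:E2) |>.mpr
    refine ⟨c⁻¹, fun u hu => ?_⟩
    have : c * ‖u‖ ≤ 1 := by rw [← hu]; exact hlow u
    simp only [Metric.mem_closedBall, dist_zero_right]
    have h2 : ‖u‖ ≤ 1 / c := by
      rw [le_div_iff₀ hc]; linarith [this]
    simpa [one_div] using h2

/-- maximizer of `⟪x, ·⟫` over the unit sphere of `𝔥`, computing `st6N`. -/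
lemma st6_Nmax (h_cont : Continuous 𝔥)
    (h_homog : ∀ c : ℝ, 0 ≤ c → ∀ v, 𝔥 (c • v) = c * 𝔥 v)
    (h_pos : ∀ v : E2, v ≠ 0 → 0 < 𝔥 v)
    (hne : ∃ u : E2, 𝔥 u = 1) (x : E2) :
    ∃ u, 𝔥 u = 1 ∧ ⟪x, u⟫_ℝ = st6N 𝔥 x ∧ ∀ u', 𝔥 u' = 1 → ⟪x, u'⟫_ℝ ≤ ⟪x, u⟫_ℝ := by
  obtain ⟨u, hu, hmax⟩ := (st6_sph_compact h_cont h_homog h_pos).exists_isMaxOn hne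
    ((continuous_const.inner continuous_id).continuousOn :
      ContinuousOn (fun u : E2 => ⟪x, u⟫_ℝ) _)
  refine ⟨u, hu, ?_, fun u' hu' => hmax hu'⟩
  have : IsGreatest ((fun u => ⟪x, u⟫_ℝ) '' {u | 𝔥 u = 1}) ⟪x, u⟫_ℝ := by
    constructor
    · exact ⟨u, hu, rfl⟩
    · rintro y ⟨u', hu', rfl⟩; exact hmax hu'
  exact (this.csSup_eq).symm

lemma st6_N1 (h_cont : Continuous 𝔥)
    (h_homog : ∀ c : ℝ, 0 ≤ c → ∀ v, 𝔥 (c • v) = c * 𝔥 v)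
    (h_pos : ∀ v : E2, v ≠ 0 → 0 < 𝔥 v)
    (hne : ∃ u : E2, 𝔥 u = 1) {x u : E2} (hu : 𝔥 u = 1) :
    ⟪x, u⟫_ℝ ≤ st6N 𝔥 x := by
  obtain ⟨w, hw, hweq, hwmax⟩ := st6_Nmax h_cont h_homog h_pos hne x
  rw [← hweq]; exact hwmax u hu

lemma st6_N1' (h_cont : Continuous 𝔥)
    (h_homog : ∀ c : ℝ, 0 ≤ c → ∀ v, 𝔥 (c • v) = c * 𝔥 v)
    (h_pos : ∀ v : E2, v ≠ 0 → 0 < 𝔥 v)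
    (hne : ∃ u : E2, 𝔥 u = 1) (x u : E2) :
    ⟪x, u⟫_ℝ ≤ st6N 𝔥 x * 𝔥 u := by
  rcases eq_or_ne u 0 with rfl | hu0
  · simp [st6_zero h_homog]
  · have hpos := h_pos u hu0
    have hc : 𝔥 ((𝔥 u)⁻¹ • u) = 1 := by
      rw [h_homog _ (inv_nonneg.mpr hpos.le), inv_mul_cancel₀ hpos.ne']
    have := st6_N1 h_cont h_homog h_pos hne (x := x) hc
    rw [real_inner_smul_right] at this
    calc ⟪x, u⟫_ℝ = 𝔥 u * ((𝔥 u)⁻¹ * ⟪x, u⟫_ℝ) := by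
          field_simp
      _ ≤ 𝔥 u * st6N 𝔥 x := mul_le_mul_of_nonneg_left this hpos.le
      _ = st6N 𝔥 x * 𝔥 u := mul_comm _ _

lemma st6_Nzero (h_cont : Continuous 𝔥)
    (h_homog : ∀ c : ℝ, 0 ≤ c → ∀ v, 𝔥 (c • v) = c * 𝔥 v)
    (h_pos : ∀ v : E2, v ≠ 0 → 0 < 𝔥 v)
    (hne : ∃ u : E2, 𝔥 u = 1) : st6N 𝔥 0 = 0 := by
  obtain ⟨w, hw, hweq, hwmax⟩ := st6_Nmax h_cont h_homog h_pos hne 0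
  rw [← hweq, inner_zero_left]

lemma st6_Nadd (h_cont : Continuous 𝔥)
    (h_homog : ∀ c : ℝ, 0 ≤ c → ∀ v, 𝔥 (c • v) = c * 𝔥 v)
    (h_pos : ∀ v : E2, v ≠ 0 → 0 < 𝔥 v)
    (hne : ∃ u : E2, 𝔥 u = 1) (x y : E2) :
    st6N 𝔥 (x + y) ≤ st6N 𝔥 x + st6N 𝔥 y := by
  obtain ⟨w, hw, hweq, -⟩ := st6_Nmax h_cont h_homog h_pos hne (x + y)
  rw [← hweq, inner_add_left]
  exact add_le_add (st6_N1 h_cont h_homog h_pos hne hw) (st6_N1 h_cont h_homog h_pos hne hw)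

lemma st6_Nhom (h_cont : Continuous 𝔥)
    (h_homog : ∀ c : ℝ, 0 ≤ c → ∀ v, 𝔥 (c • v) = c * 𝔥 v)
    (h_pos : ∀ v : E2, v ≠ 0 → 0 < 𝔥 v)
    (hne : ∃ u : E2, 𝔥 u = 1) {c : ℝ} (hc : 0 ≤ c) (x : E2) :
    st6N 𝔥 (c • x) = c * st6N 𝔥 x := by
  obtain ⟨w, hw, hweq, hwmax⟩ := st6_Nmax h_cont h_homog h_pos hne (c • x)
  obtain ⟨w', hw', hweq', hwmax'⟩ := st6_Nmax h_cont h_homog h_pos hne x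
  apply le_antisymm
  · rw [← hweq, ← hweq', real_inner_smul_left]
    exact mul_le_mul_of_nonneg_left (hwmax' w hw) hc
  · rw [← hweq', ← hweq]
    calc c * ⟪x, w'⟫_ℝ = ⟪c • x, w'⟫_ℝ := (real_inner_smul_left _ _ _).symm
      _ ≤ ⟪c • x, w⟫_ℝ := hwmax _ hw'

lemma st6_Neven (h_cont : Continuous 𝔥)
    (h_homog : ∀ c : ℝ, 0 ≤ c → ∀ v, 𝔥 (c • v) = c * 𝔥 v)
    (h_symm : ∀ v : E2, 𝔥 (-v) = 𝔥 v)
    (h_pos : ∀ v : E2, v ≠ 0 → 0 < 𝔥 v)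
    (hne : ∃ u : E2, 𝔥 u = 1) (x : E2) :
    st6N 𝔥 (-x) = st6N 𝔥 x := by
  have key : ∀ z : E2, st6N 𝔥 (-z) ≤ st6N 𝔥 z := by
    intro z
    obtain ⟨w, hw, hweq, -⟩ := st6_Nmax h_cont h_homog h_pos hne (-z)
    rw [← hweq]
    have hw' : 𝔥 (-w) = 1 := by rw [h_symm]; exact hw
    calc ⟪-z, w⟫_ℝ = ⟪z, -w⟫_ℝ := by rw [inner_neg_left, inner_neg_right]
      _ ≤ st6N 𝔥 z := st6_N1 h_cont h_homog h_pos hne hw'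
  have := key (-x); rw [neg_neg] at this
  exact le_antisymm (key x) this

lemma st6_Nnonneg (h_cont : Continuous 𝔥)
    (h_homog : ∀ c : ℝ, 0 ≤ c → ∀ v, 𝔥 (c • v) = c * 𝔥 v)
    (h_symm : ∀ v : E2, 𝔥 (-v) = 𝔥 v)
    (h_pos : ∀ v : E2, v ≠ 0 → 0 < 𝔥 v)
    (hne : ∃ u : E2, 𝔥 u = 1) (x : E2) : 0 ≤ st6N 𝔥 x := by
  obtain ⟨w, hw, hweq, hwmax⟩ := st6_Nmax h_cont h_homog h_pos hne x
  have hw' : 𝔥 (-w) = 1 := by rw [h_symm]; exact hw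
  have := hwmax (-w) hw'
  rw [inner_neg_right] at this
  rw [← hweq]; linarith

lemma st6_Npos (h_cont : Continuous 𝔥)
    (h_homog : ∀ c : ℝ, 0 ≤ c → ∀ v, 𝔥 (c • v) = c * 𝔥 v)
    (h_pos : ∀ v : E2, v ≠ 0 → 0 < 𝔥 v)
    (hne : ∃ u : E2, 𝔥 u = 1) {x : E2} (hx : x ≠ 0) : 0 < st6N 𝔥 x := by
  have hpos := h_pos x hx
  have hc : 𝔥 ((𝔥 x)⁻¹ • x) = 1 := by
    rw [h_homog _ (inv_nonneg.mpr hpos.le), inv_mul_cancel₀ hpos.ne']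
  have h1 := st6_N1 h_cont h_homog h_pos hne (x := x) hc
  rw [real_inner_smul_right, real_inner_self_eq_norm_sq] at h1
  have : 0 < (𝔥 x)⁻¹ * (‖x‖ ^ 2) := by
    apply mul_pos (inv_pos.mpr hpos)
    have hn := norm_pos_iff.mpr hx
    positivity
  linarith

lemma st6_Ncont (h_cont : Continuous 𝔥)
    (h_homog : ∀ c : ℝ, 0 ≤ c → ∀ v, 𝔥 (c • v) = c * 𝔥 v)
    (h_pos : ∀ v : E2, v ≠ 0 → 0 < 𝔥 v)
    (hne : ∃ u : E2, 𝔥 u = 1) : Continuous (st6N 𝔥) := by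
  obtain ⟨c, hc, hlow⟩ := st6_lower h_cont h_homog h_pos
  have key : ∀ x y : E2, st6N 𝔥 x ≤ st6N 𝔥 y + c⁻¹ * ‖x - y‖ := by
    intro x y
    obtain ⟨w, hw, hweq, -⟩ := st6_Nmax h_cont h_homog h_pos hne x
    have hwnorm : ‖w‖ ≤ c⁻¹ := by
      have h1 : c * ‖w‖ ≤ 1 := by rw [← hw]; exact hlow w
      have h2 : ‖w‖ ≤ 1 / c := by rw [le_div_iff₀ hc]; linarith
      simpa [one_div] using h2
    have : ⟪x, w⟫_ℝ = ⟪y, w⟫_ℝ + ⟪x - y, w⟫_ℝ := by rw [← inner_add_left]; congr 1; abel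
    rw [← hweq, this]
    have h3 : ⟪x - y, w⟫_ℝ ≤ ‖x - y‖ * ‖w‖ := real_inner_le_norm _ _
    have h4 : ⟪y, w⟫_ℝ ≤ st6N 𝔥 y := st6_N1 h_cont h_homog h_pos hne hw
    have h5 : ‖x - y‖ * ‖w‖ ≤ ‖x - y‖ * c⁻¹ := by
      apply mul_le_mul_of_nonneg_left hwnorm (norm_nonneg _)
    nlinarith
  rw [Metric.continuous_iff]
  intro x ε hε
  refine ⟨ε * c, by positivity, fun y hy => ?_⟩
  rw [Real.dist_eq, abs_sub_lt_iff]
  have h1 := key y x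
  have h2 := key x y
  have hxy : ‖y - x‖ < ε * c := by rwa [← dist_eq_norm]
  have hyx : ‖x - y‖ < ε * c := by rwa [norm_sub_rev]
  constructor
  · have h6 : c⁻¹ * ‖y - x‖ < ε := by
      rw [inv_mul_eq_div, div_lt_iff₀ hc]; linarith
    linarith
  · have h6 : c⁻¹ * ‖x - y‖ < ε := by
      rw [inv_mul_eq_div, div_lt_iff₀ hc]; linarith
    linarith

lemma st6_support_grad
    (h_homog : ∀ c : ℝ, 0 ≤ c → ∀ v, 𝔥 (c • v) = c * 𝔥 v)
    (h_C1 : ContDiffOn ℝ 1 𝔥 {(0 : E2)}ᶜ)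
    {x w : E2} (hw : 𝔥 w = 1) (hsup : ∀ u, ⟪x, u⟫_ℝ ≤ 𝔥 u)
    (heq : ⟪x, w⟫_ℝ = 1) : gradient 𝔥 w = x := by
  have hw0 : w ≠ 0 := st6_ne_zero h_homog hw
  set F : E2 → ℝ := fun u => 𝔥 u - ⟪x, u⟫_ℝ with hF
  have hinner : HasFDerivAt (fun u : E2 => ⟪x, u⟫_ℝ) (toDual ℝ E2 x) w := by
    have h := (toDual ℝ E2 x).hasFDerivAt (x := w)
    have heq2 : (fun u : E2 => ⟪x, u⟫_ℝ) = ⇑(toDual ℝ E2 x) := by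
      funext u; rw [toDual_apply_apply]
    rw [heq2]; exact h
  have hFd : HasFDerivAt F (toDual ℝ E2 (gradient 𝔥 w) - toDual ℝ E2 x) w :=
    ((st6_grad h_C1 hw0).hasFDerivAt).sub hinner
  have hmin : IsLocalMin F w := by
    apply Filter.Eventually.of_forall
    intro u
    have h1 : F w = 0 := by
      show 𝔥 w - ⟪x, w⟫_ℝ = 0
      rw [hw, heq]; ring
    have h2 : 0 ≤ F u := by
      show 0 ≤ 𝔥 u - ⟪x, u⟫_ℝ
      linarith [hsup u]
    rw [h1]; exact h2
  have hzero := hmin.hasFDerivAt_eq_zero hFd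
  have h0 : toDual ℝ E2 (gradient 𝔥 w - x) = toDual ℝ E2 0 := by
    rw [map_sub, map_zero]; exact hzero
  have := (toDual ℝ E2).injective h0
  rwa [sub_eq_zero] at this

lemma st6_Ngrad_one (h_cont : Continuous 𝔥)
    (h_homog : ∀ c : ℝ, 0 ≤ c → ∀ v, 𝔥 (c • v) = c * 𝔥 v)
    (h_pos : ∀ v : E2, v ≠ 0 → 0 < 𝔥 v)
    (h_C1 : ContDiffOn ℝ 1 𝔥 {(0 : E2)}ᶜ)
    (h_strict : ∀ t ∈ Set.Ioo (0:ℝ) 1, ∀ ν μ : E2,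
      ¬ ((∃ l : ℝ, 0 ≤ l ∧ ν = l • μ) ∨ (∃ l : ℝ, 0 ≤ l ∧ μ = l • ν)) →
      𝔥 (t • ν + (1 - t) • μ) < t * 𝔥 ν + (1 - t) * 𝔥 μ)
    {v : E2} (hv : 𝔥 v = 1) : st6N 𝔥 (gradient 𝔥 v) = 1 := by
  have hv0 : v ≠ 0 := st6_ne_zero h_homog hv
  have hconv := st6_convex h_homog h_strict
  have hne : ∃ u : E2, 𝔥 u = 1 := ⟨v, hv⟩
  obtain ⟨w, hw, hweq, hwmax⟩ := st6_Nmax h_cont h_homog h_pos hne (gradient 𝔥 v)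
  rw [← hweq]
  have h1 := hwmax v hv
  have h2 : ⟪gradient 𝔥 v, v⟫_ℝ = 1 := by rw [st6_euler h_homog h_C1 hv0, hv]
  have h3 : ⟪gradient 𝔥 v, w⟫_ℝ ≤ 1 := by
    have := st6_subgrad hconv h_homog h_C1 hv0 w
    rwa [hw] at this
  linarith

lemma st6_Nsurj (h_cont : Continuous 𝔥)
    (h_homog : ∀ c : ℝ, 0 ≤ c → ∀ v, 𝔥 (c • v) = c * 𝔥 v)
    (h_pos : ∀ v : E2, v ≠ 0 → 0 < 𝔥 v)
    (h_C1 : ContDiffOn ℝ 1 𝔥 {(0 : E2)}ᶜ)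
    (hne : ∃ u : E2, 𝔥 u = 1) {x : E2} (hx : st6N 𝔥 x = 1) :
    ∃ w, 𝔥 w = 1 ∧ gradient 𝔥 w = x := by
  obtain ⟨w, hw, hweq, -⟩ := st6_Nmax h_cont h_homog h_pos hne x
  refine ⟨w, hw, st6_support_grad h_homog h_C1 hw ?_ (by rw [hweq, hx])⟩
  intro u
  have := st6_N1' h_cont h_homog h_pos hne x u
  rwa [hx, one_mul] at this

lemma st6_Nmid (h_cont : Continuous 𝔥)
    (h_homog : ∀ c : ℝ, 0 ≤ c → ∀ v, 𝔥 (c • v) = c * 𝔥 v)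
    (h_pos : ∀ v : E2, v ≠ 0 → 0 < 𝔥 v)
    (h_C1 : ContDiffOn ℝ 1 𝔥 {(0 : E2)}ᶜ)
    (hne : ∃ u : E2, 𝔥 u = 1) {a b : E2} (ha : st6N 𝔥 a = 1) (hb : st6N 𝔥 b = 1)
    (hab : a ≠ b) : st6N 𝔥 ((1/2 : ℝ) • (a + b)) < 1 := by
  have hle : st6N 𝔥 ((1/2 : ℝ) • (a + b)) ≤ 1 := by
    rw [st6_Nhom h_cont h_homog h_pos hne (by norm_num)]
    have := st6_Nadd h_cont h_homog h_pos hne a b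
    rw [ha, hb] at this; linarith
  rcases lt_or_eq_of_le hle with h | h
  · exact h
  exfalso
  obtain ⟨w, hw, hweq, -⟩ := st6_Nmax h_cont h_homog h_pos hne ((1/2 : ℝ) • (a + b))
  have hweq1 : ⟪(1/2 : ℝ) • (a + b), w⟫_ℝ = 1 := by rw [hweq, h]
  rw [real_inner_smul_left, inner_add_left] at hweq1
  have hha : ⟪a, w⟫_ℝ ≤ 1 := by
    have := st6_N1' h_cont h_homog h_pos hne a w
    rwa [ha, one_mul, hw] at this
  have hhb : ⟪b, w⟫_ℝ ≤ 1 := by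
    have := st6_N1' h_cont h_homog h_pos hne b w
    rwa [hb, one_mul, hw] at this
  have hea : ⟪a, w⟫_ℝ = 1 := by linarith
  have heb : ⟪b, w⟫_ℝ = 1 := by linarith
  have hga : gradient 𝔥 w = a := by
    apply st6_support_grad h_homog h_C1 hw _ hea
    intro u
    have := st6_N1' h_cont h_homog h_pos hne a u
    rwa [ha, one_mul] at this
  have hgb : gradient 𝔥 w = b := by
    apply st6_support_grad h_homog h_C1 hw _ heb
    intro u
    have := st6_N1' h_cont h_homog h_pos hne b u
    rwa [hb, one_mul] at this
  exact hab (hga ▸ hgb ▸ rfl)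

lemma st6_strictball (h_cont : Continuous 𝔥)
    (h_homog : ∀ c : ℝ, 0 ≤ c → ∀ v, 𝔥 (c • v) = c * 𝔥 v)
    (h_pos : ∀ v : E2, v ≠ 0 → 0 < 𝔥 v)
    (h_C1 : ContDiffOn ℝ 1 𝔥 {(0 : E2)}ᶜ)
    (hne : ∃ u : E2, 𝔥 u = 1) {a b : E2} {t : ℝ}
    (ha : st6N 𝔥 a ≤ 1) (hb : st6N 𝔥 b ≤ 1) (hab : a ≠ b)
    (ht : t ∈ Set.Ioo (0:ℝ) 1) :
    st6N 𝔥 (t • a + (1 - t) • b) < 1 := by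
  obtain ⟨ht0, ht1⟩ := ht
  have Nadd := st6_Nadd h_cont h_homog h_pos hne
  have Nhom : ∀ {c : ℝ}, 0 ≤ c → ∀ x, st6N 𝔥 (c • x) = c * st6N 𝔥 x :=
    fun hc x => st6_Nhom h_cont h_homog h_pos hne hc x
  rcases lt_or_eq_of_le ha with ha' | ha'
  · calc st6N 𝔥 (t • a + (1 - t) • b) ≤ st6N 𝔥 (t • a) + st6N 𝔥 ((1-t) • b) := Nadd _ _
      _ = t * st6N 𝔥 a + (1 - t) * st6N 𝔥 b := by
          rw [Nhom ht0.le, Nhom (by linarith : (0:ℝ) ≤ 1 - t)]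
      _ < 1 := by nlinarith
  rcases lt_or_eq_of_le hb with hb' | hb'
  · calc st6N 𝔥 (t • a + (1 - t) • b) ≤ st6N 𝔥 (t • a) + st6N 𝔥 ((1-t) • b) := Nadd _ _
      _ = t * st6N 𝔥 a + (1 - t) * st6N 𝔥 b := by
          rw [Nhom ht0.le, Nhom (by linarith : (0:ℝ) ≤ 1 - t)]
      _ < 1 := by nlinarith
  -- both on the sphere
  have hmid := st6_Nmid h_cont h_homog h_pos h_C1 hne ha' hb' hab
  set m : E2 := (1/2 : ℝ) • (a + b) with hm
  rcases lt_trichotomy t (1/2) with h | h | h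
  · have hdecomp : t • a + (1 - t) • b = (2*t) • m + (1 - 2*t) • b := by
      rw [hm]; module
    rw [hdecomp]
    calc st6N 𝔥 ((2*t) • m + (1 - 2*t) • b)
        ≤ st6N 𝔥 ((2*t) • m) + st6N 𝔥 ((1 - 2*t) • b) := Nadd _ _
      _ = (2*t) * st6N 𝔥 m + (1 - 2*t) * st6N 𝔥 b := by
          rw [Nhom (by linarith : (0:ℝ) ≤ 2*t), Nhom (by linarith : (0:ℝ) ≤ 1 - 2*t)]
      _ < 1 := by rw [← hb']; nlinarith
  · have hmeq : t • a + (1 - t) • b = m := by rw [hm, h]; module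
    rw [hmeq]; exact hmid
  · have hdecomp : t • a + (1 - t) • b = (2*t - 1) • a + (2 - 2*t) • m := by
      rw [hm]; module
    rw [hdecomp]
    calc st6N 𝔥 ((2*t-1) • a + (2 - 2*t) • m)
        ≤ st6N 𝔥 ((2*t-1) • a) + st6N 𝔥 ((2 - 2*t) • m) := Nadd _ _
      _ = (2*t-1) * st6N 𝔥 a + (2 - 2*t) * st6N 𝔥 m := by
          rw [Nhom (by linarith : (0:ℝ) ≤ 2*t-1), Nhom (by linarith : (0:ℝ) ≤ 2 - 2*t)]
      _ < 1 := by rw [← ha']; nlinarith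

end st6

section st6geo
variable {N : E2 → ℝ}

/-- three points on a horizontal line (w.r.t. unit direction `e`), middle one
is strictly inside the unit ball of `N`. -/
lemma st6_middle
    (hsb : ∀ {a b : E2} {t : ℝ}, N a ≤ 1 → N b ≤ 1 → a ≠ b → t ∈ Set.Ioo (0:ℝ) 1 →
      N (t • a + (1 - t) • b) < 1)
    {e : E2} (he : ‖e‖ = 1) {w1 w2 w3 : E2}
    (hn1 : ⟪w1, st6perp e⟫_ℝ = ⟪w2, st6perp e⟫_ℝ)
    (hn3 : ⟪w3, st6perp e⟫_ℝ = ⟪w2, st6perp e⟫_ℝ)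
    (h12 : ⟪w1, e⟫_ℝ < ⟪w2, e⟫_ℝ) (h23 : ⟪w2, e⟫_ℝ < ⟪w3, e⟫_ℝ)
    (h1 : N w1 ≤ 1) (h3 : N w3 ≤ 1) : N w2 < 1 := by
  set t1 := ⟪w1, e⟫_ℝ
  set t2 := ⟪w2, e⟫_ℝ
  set t3 := ⟪w3, e⟫_ℝ
  set θ : ℝ := (t3 - t2) / (t3 - t1) with hθ
  have h13 : t1 < t3 := lt_trans h12 h23
  have hd : (0:ℝ) < t3 - t1 := by linarith
  have hθ0 : 0 < θ := div_pos (by linarith) hd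
  have hθ1 : θ < 1 := by
    rw [hθ, div_lt_one hd]; linarith
  have hne13 : w1 ≠ w3 := by
    intro h
    have : t1 = t3 := by simp only [t1, t3, h]
    linarith
  have hco : θ * t1 + (1 - θ) * t3 = t2 := by
    have hθd : θ * (t3 - t1) = t3 - t2 := by rw [hθ]; exact div_mul_cancel₀ _ hd.ne'
    linear_combination -hθd
  have hdecomp : w2 = θ • w1 + (1 - θ) • w3 := by
    have e1 := st6_expand he w1
    have e2 := st6_expand he w2
    have e3 := st6_expand he w3
    rw [hn1] at e1; rw [hn3] at e3
    calc w2 = t2 • e + ⟪w2, st6perp e⟫_ℝ • st6perp e := e2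
      _ = (θ * t1 + (1 - θ) * t3) • e + (θ + (1 - θ)) • ⟪w2, st6perp e⟫_ℝ • st6perp e := by
          rw [hco]; norm_num
      _ = θ • (t1 • e + ⟪w2, st6perp e⟫_ℝ • st6perp e)
          + (1 - θ) • (t3 • e + ⟪w2, st6perp e⟫_ℝ • st6perp e) := by module
      _ = θ • w1 + (1 - θ) • w3 := by rw [← e1, ← e3]
  rw [hdecomp]
  exact hsb h1 h3 hne13 ⟨hθ0, hθ1⟩

/-- No three distinct points `x` with `N x = 1 = N (x - s)`. -/
lemma st6_no_three
    (hsb : ∀ {a b : E2} {t : ℝ}, N a ≤ 1 → N b ≤ 1 → a ≠ b → t ∈ Set.Ioo (0:ℝ) 1 →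
      N (t • a + (1 - t) • b) < 1)
    {s x y z : E2} (hs : s ≠ 0)
    (hx : N x = 1) (hxs : N (x - s) = 1)
    (hy : N y = 1) (hys : N (y - s) = 1)
    (hz : N z = 1) (hzs : N (z - s) = 1)
    (hxy : x ≠ y) (hxz : x ≠ z) (hyz : y ≠ z) : False := by
  have hσ : (0:ℝ) < ‖s‖ := norm_pos_iff.mpr hs
  set σ := ‖s‖ with hσdef
  set e : E2 := σ⁻¹ • s with he_def
  have he : ‖e‖ = 1 := by
    rw [he_def, norm_smul, Real.norm_eq_abs, abs_of_pos (inv_pos.mpr hσ)]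
    field_simp
    exact hσdef.symm
  set n : E2 := st6perp e with hn_def
  have hse : ⟪s, e⟫_ℝ = σ := by
    rw [he_def, real_inner_smul_right, real_inner_self_eq_norm_sq]
    rw [← hσdef]; field_simp
  have hsn : ⟪s, n⟫_ℝ = 0 := by
    rw [hn_def, he_def, st6_perp_smul, real_inner_smul_right, st6_inner_perp_self, mul_zero]
  -- coordinates of translates
  have hτs : ∀ w : E2, ⟪w - s, e⟫_ℝ = ⟪w, e⟫_ℝ - σ := by
    intro w; rw [inner_sub_left, hse]
  have hψs : ∀ w : E2, ⟪w - s, n⟫_ℝ = ⟪w, n⟫_ℝ := by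
    intro w; rw [inner_sub_left, hsn, sub_zero]
  -- Step A : points of S have pairwise distinct ψ-coordinates
  have stepA : ∀ a b : E2, N a = 1 → N (a - s) = 1 → N b = 1 → N (b - s) = 1 → a ≠ b →
      ⟪a, n⟫_ℝ ≠ ⟪b, n⟫_ℝ := by
    intro a b ha has hb hbs hab hψ
    rcases lt_trichotomy ⟪a, e⟫_ℝ ⟪b, e⟫_ℝ with h | h | h
    · -- a strictly between a - s and b
      have := st6_middle hsb he (w1 := a - s) (w2 := a) (w3 := b)
        (by rw [hψs]) hψ.symm (by rw [hτs]; linarith) h (le_of_eq has) (le_of_eq hb)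
      rw [ha] at this; exact lt_irrefl _ this
    · exact hab (st6_coord_ext he h hψ)
    · -- b strictly between b - s and a
      have := st6_middle hsb he (w1 := b - s) (w2 := b) (w3 := a)
        (by rw [hψs]) hψ (by rw [hτs]; linarith) h (le_of_eq hbs) (le_of_eq ha)
      rw [hb] at this; exact lt_irrefl _ this
  -- sorted main case
  have sorted : ∀ a b c : E2, N a = 1 → N (a - s) = 1 → N b = 1 → N (b - s) = 1 →
      N c = 1 → N (c - s) = 1 → ⟪a, n⟫_ℝ < ⟪b, n⟫_ℝ → ⟪b, n⟫_ℝ < ⟪c, n⟫_ℝ → False := by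
    intro a b c ha has hb hbs hc hcs hab hbc
    set ψa := ⟪a, n⟫_ℝ
    set ψb := ⟪b, n⟫_ℝ
    set ψc := ⟪c, n⟫_ℝ
    have hac : ψa < ψc := lt_trans hab hbc
    set lam : ℝ := (ψc - ψb) / (ψc - ψa) with hlam
    have hd : (0:ℝ) < ψc - ψa := by linarith
    have hlam0 : 0 < lam := div_pos (by linarith) hd
    have hlam1 : lam < 1 := by rw [hlam, div_lt_one hd]; linarith
    have hacne : a ≠ c := by
      intro h
      have : ψa = ψc := by simp only [ψa, ψc, h]
      linarith
    have hacsne : a - s ≠ c - s := by intro h; exact hacne (by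
      have := congrArg (· + s) h; simpa using this)
    set w : E2 := lam • a + (1 - lam) • c with hw
    have hNw : N w < 1 := hsb (le_of_eq ha) (le_of_eq hc) hacne ⟨hlam0, hlam1⟩
    have hws : w - s = lam • (a - s) + (1 - lam) • (c - s) := by rw [hw]; module
    have hNws : N (w - s) < 1 := by
      rw [hws]; exact hsb (le_of_eq has) (le_of_eq hcs) hacsne ⟨hlam0, hlam1⟩
    have hψw : ⟪w, n⟫_ℝ = ψb := by
      rw [hw, inner_add_left, real_inner_smul_left, real_inner_smul_left]
      show lam * ψa + (1 - lam) * ψc = ψb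
      have hld : lam * (ψc - ψa) = ψc - ψb := by rw [hlam]; exact div_mul_cancel₀ _ hd.ne'
      linear_combination -hld
    -- compare e-coordinates of b and w
    rcases lt_trichotomy ⟪b, e⟫_ℝ ⟪w, e⟫_ℝ with h | h | h
    · -- b strictly between b - s and w
      have := st6_middle hsb he (w1 := b - s) (w2 := b) (w3 := w)
        (by rw [hψs]) hψw (by rw [hτs]; linarith) h (le_of_eq hbs) hNw.le
      rw [hb] at this; exact lt_irrefl _ this
    · -- b = w
      have : b = w := st6_coord_ext he h (by rw [hψw])
      rw [← this] at hNw; rw [hb] at hNw; exact lt_irrefl _ hNw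
    · -- b - s strictly between w - s and b
      have := st6_middle hsb he (w1 := w - s) (w2 := b - s) (w3 := b)
        (by rw [hψs, hψs, hψw]) (by rw [hψs]) (by rw [hτs, hτs]; linarith)
        (by rw [hτs]; linarith) hNws.le (le_of_eq hb)
      rw [hbs] at this; exact lt_irrefl _ this
  -- use Step A to order the three points
  have h1 := stepA x y hx hxs hy hys hxy
  have h2 := stepA x z hx hxs hz hzs hxz
  have h3 := stepA y z hy hys hz hzs hyz
  rcases lt_trichotomy ⟪x, n⟫_ℝ ⟪y, n⟫_ℝ with hxy' | hxy' | hxy' <;>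
  rcases lt_trichotomy ⟪x, n⟫_ℝ ⟪z, n⟫_ℝ with hxz' | hxz' | hxz' <;>
  rcases lt_trichotomy ⟪y, n⟫_ℝ ⟪z, n⟫_ℝ with hyz' | hyz' | hyz'
  all_goals first
    | exact absurd hxy' h1
    | exact absurd hxz' h2
    | exact absurd hyz' h3
    | exact sorted x y z hx hxs hy hys hz hzs hxy' hyz'
    | exact sorted x z y hx hxs hz hzs hy hys hxz' (by linarith)
    | exact sorted y x z hy hys hx hxs hz hzs (by linarith) hxz'
    | exact sorted y z x hy hys hz hzs hx hxs hyz' (by linarith)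
    | exact sorted z x y hz hzs hx hxs hy hys (by linarith) hxy'
    | exact sorted z y x hz hzs hy hys hx hxs (by linarith) (by linarith)

end st6geo


section st6ex
variable {N : E2 → ℝ}

lemma st6_exists (Ncont : Continuous N)
    (Nhom : ∀ {c : ℝ}, 0 ≤ c → ∀ x : E2, N (c • x) = c * N x)
    (Npos : ∀ {x : E2}, x ≠ 0 → 0 < N x)
    (Neven : ∀ x : E2, N (-x) = N x)
    {p : E2} (hp : N p = 1) : ∃ q r : E2, N q = 1 ∧ N r = 1 ∧ q + r = -p := by
  have hN0 : N 0 = 0 := by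
    have := Nhom le_rfl (0 : E2); simpa using this
  have hp0 : p ≠ 0 := by
    intro h; rw [h, hN0] at hp; norm_num at hp
  set c : ℝ → E2 := fun t => (1 - 2*t) • p + (4*t*(1-t)) • st6perp p with hc
  have hpperp : ⟪p, st6perp p⟫_ℝ = 0 := st6_inner_perp_self p
  have hnp2 : (0:ℝ) < ‖p‖^2 := by
    have := norm_pos_iff.mpr hp0; positivity
  have hcne : ∀ t : ℝ, c t ≠ 0 := by
    intro t h
    have h1 : ⟪c t, p⟫_ℝ = (1 - 2*t) * ‖p‖^2 := by
      rw [hc]; simp only [inner_add_left, real_inner_smul_left]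
      rw [real_inner_self_eq_norm_sq, real_inner_comm, hpperp]; ring
    have h2 : ⟪c t, st6perp p⟫_ℝ = (4*t*(1-t)) * ‖p‖^2 := by
      rw [hc]; simp only [inner_add_left, real_inner_smul_left]
      rw [hpperp, real_inner_self_eq_norm_sq, st6_perp_norm]; ring
    rw [h, inner_zero_left] at h1 h2
    have e1 : 1 - 2*t = 0 := by
      rcases mul_eq_zero.mp h1.symm with h' | h'
      · exact h'
      · exact absurd h' (by positivity)
    have e2 : 4*t*(1-t) = 0 := by
      rcases mul_eq_zero.mp h2.symm with h' | h'
      · exact h'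
      · exact absurd h' (by positivity)
    have : t = 1/2 := by linarith
    rw [this] at e2; norm_num at e2
  have hNcpos : ∀ t : ℝ, 0 < N (c t) := fun t => Npos (hcne t)
  set γ : ℝ → E2 := fun t => (N (c t))⁻¹ • c t with hγ
  have hNγ : ∀ t : ℝ, N (γ t) = 1 := by
    intro t
    rw [hγ]; simp only
    rw [Nhom (inv_nonneg.mpr (hNcpos t).le), inv_mul_cancel₀ (hNcpos t).ne']
  set f : ℝ → ℝ := fun t => N (-p - γ t) with hf
  have hccont : Continuous c := by
    apply Continuous.add
    · exact (continuous_const.sub (continuous_const.mul continuous_id)).smul continuous_const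
    · exact ((continuous_const.mul continuous_id).mul
        (continuous_const.sub continuous_id)).smul continuous_const
  have hγcont : Continuous γ := by
    rw [hγ]
    exact ((Ncont.comp hccont).inv₀ (fun t => (hNcpos t).ne')).smul hccont
  have hfcont : Continuous f := Ncont.comp (continuous_const.sub hγcont)
  have hf0 : f 0 = 2 := by
    have hc0 : c 0 = p := by rw [hc]; norm_num
    have hγ0 : γ 0 = p := by rw [hγ]; simp only [hc0, hp]; norm_num
    rw [hf]; simp only [hγ0]
    have : -p - p = -((2:ℝ) • p) := by module
    rw [this, Neven, Nhom (by norm_num : (0:ℝ) ≤ 2), hp]; norm_num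
  have hf1 : f 1 = 0 := by
    have hc1 : c 1 = -p := by rw [hc]; module
    have hγ1 : γ 1 = -p := by rw [hγ]; simp only [hc1, Neven, hp]; norm_num
    rw [hf]; simp only [hγ1]
    have : -p - -p = (0 : E2) := by module
    rw [this, hN0]
  have hIVT := intermediate_value_Icc' (by norm_num : (0:ℝ) ≤ 1) hfcont.continuousOn
  have h1mem : (1:ℝ) ∈ Set.Icc (f 1) (f 0) := by rw [hf0, hf1]; norm_num
  obtain ⟨t, -, hft⟩ := hIVT h1mem
  refine ⟨γ t, -p - γ t, hNγ t, hft, by abel⟩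

lemma st6_pairs
    (hsb : ∀ {a b : E2} {t : ℝ}, N a ≤ 1 → N b ≤ 1 → a ≠ b → t ∈ Set.Ioo (0:ℝ) 1 →
      N (t • a + (1 - t) • b) < 1)
    (Neven : ∀ x : E2, N (-x) = N x) (hN0 : N 0 = 0)
    {p q r q' r' : E2} (hp : N p = 1)
    (hq : N q = 1) (hr : N r = 1) (hsum : q + r = -p)
    (hq' : N q' = 1) (hr' : N r' = 1) (hsum' : q' + r' = -p) :
    ({q', r'} : Set E2) = {q, r} := by
  set s : E2 := -p with hs_def
  have hs : s ≠ 0 := by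
    intro h
    have : p = 0 := by rw [hs_def] at h; simpa using (neg_eq_zero.mp h)
    rw [this, hN0] at hp; norm_num at hp
  have memS : ∀ a b : E2, N b = 1 → a + b = s → N (a - s) = 1 := by
    intro a b hb hab
    have : a - s = -b := by rw [← hab]; abel
    rw [this, Neven]; exact hb
  have hqS := memS q r hr hsum
  have hrS := memS r q hq (by rw [← hsum]; abel)
  have hq'S := memS q' r' hr' hsum'
  have hr'S := memS r' q' hq' (by rw [← hsum']; abel)
  have hclaim : q' = q ∨ q' = r := by
    by_contra hno
    push_neg at hno
    obtain ⟨h1, h2⟩ := hno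
    rcases eq_or_ne q r with hqr | hqr
    · -- q = r, so s = q + q
      have hsq : s = q + q := by rw [← hsum, ← hqr]
      rcases eq_or_ne q' r' with hq'r' | hq'r'
      · -- q' + q' = q + q
        have : q' + q' = q + q := by rw [← hq'r'] at hsum'; rw [hsum', hsq]
        have h2q : (2:ℝ) • q' = (2:ℝ) • q := by
          rw [two_smul, two_smul]; exact this
        exact h1 (smul_right_injective E2 (by norm_num : (2:ℝ) ≠ 0) h2q)
      · -- three distinct points q', r', q
        have hr'q : r' ≠ q := by
          intro h
          apply h1
          have : q' = s - r' := by rw [← hsum']; abel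
          rw [this, h, hsq]; abel
        exact st6_no_three hsb hs hq' hq'S hr' hr'S hq hqS hq'r' h1 hr'q
    · exact st6_no_three hsb hs hq' hq'S hq hqS hr hrS h1 h2 hqr
  rcases hclaim with h | h
  · have : r' = r := by
      have := hsum'.trans hsum.symm
      rw [h] at this
      exact add_left_cancel this
    rw [h, this]
  · have : r' = q := by
      have h3 : q' + r' = q + r := hsum'.trans hsum.symm
      rw [h] at h3
      have h4 : r + r' = r + q := h3.trans (add_comm q r)
      exact add_left_cancel h4
    rw [h, this, Set.pair_comm]
end st6ex

section st6final
variable {𝔥 : E2 → ℝ}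

lemma st6_inj
    (h_homog : ∀ c : ℝ, 0 ≤ c → ∀ v, 𝔥 (c • v) = c * 𝔥 v)
    (h_C1 : ContDiffOn ℝ 1 𝔥 {(0 : E2)}ᶜ)
    (h_strict : ∀ t ∈ Set.Ioo (0:ℝ) 1, ∀ ν μ : E2,
      ¬ ((∃ l : ℝ, 0 ≤ l ∧ ν = l • μ) ∨ (∃ l : ℝ, 0 ≤ l ∧ μ = l • ν)) →
      𝔥 (t • ν + (1 - t) • μ) < t * 𝔥 ν + (1 - t) * 𝔥 μ)
    {v w : E2} (hv : 𝔥 v = 1) (hw : 𝔥 w = 1)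
    (h : gradient 𝔥 v = gradient 𝔥 w) : v = w := by
  have hv0 : v ≠ 0 := st6_ne_zero h_homog hv
  have hw0 : w ≠ 0 := st6_ne_zero h_homog hw
  by_cases hpar : (∃ l : ℝ, 0 ≤ l ∧ v = l • w) ∨ (∃ l : ℝ, 0 ≤ l ∧ w = l • v)
  · rcases hpar with ⟨l, hl, hvw⟩ | ⟨l, hl, hwv⟩
    · have : 𝔥 v = l * 𝔥 w := by rw [hvw, h_homog l hl]
      rw [hv, hw, mul_one] at this
      rw [hvw, ← this, one_smul]
    · have : 𝔥 w = l * 𝔥 v := by rw [hwv, h_homog l hl]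
      rw [hv, hw, mul_one] at this
      rw [hwv, ← this, one_smul]
  · exfalso
    have hconv := st6_convex h_homog h_strict
    have hlt := st6_subgrad_strict hconv h_homog h_C1 h_strict hv0 hpar
    rw [h, st6_euler h_homog h_C1 hw0] at hlt
    exact lt_irrefl _ hlt
end st6final



/-- Let `𝔥 : ℝ² → ℝ` be continuous, positively 1-homogeneous,
symmetric, positive away from `0`, `C¹` on `ℝ² \ {0}`, and strictly convex. Then for
every point `A` with `𝔥 A = 1` there is exactly one unordered pair `{B, C}` of points of
the unit sphere such that `∇𝔥 A + ∇𝔥 B + ∇𝔥 C = 0`. -/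
theorem statement_6 (𝔥 : EuclideanSpace ℝ (Fin 2) → ℝ)
    (h_cont : Continuous 𝔥)
    (h_homog : ∀ c : ℝ, 0 ≤ c → ∀ v, 𝔥 (c • v) = c * 𝔥 v)
    (h_symm : ∀ v : EuclideanSpace ℝ (Fin 2), 𝔥 (-v) = 𝔥 v)
    (h_pos : ∀ v : EuclideanSpace ℝ (Fin 2), v ≠ 0 → 0 < 𝔥 v)
    (h_C1 : ContDiffOn ℝ 1 𝔥 {(0 : EuclideanSpace ℝ (Fin 2))}ᶜ)
    (h_strict : ∀ t ∈ Set.Ioo (0:ℝ) 1, ∀ ν μ : EuclideanSpace ℝ (Fin 2),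
      ¬ ((∃ l : ℝ, 0 ≤ l ∧ ν = l • μ) ∨ (∃ l : ℝ, 0 ≤ l ∧ μ = l • ν)) →
      𝔥 (t • ν + (1 - t) • μ) < t * 𝔥 ν + (1 - t) * 𝔥 μ)
    (A : EuclideanSpace ℝ (Fin 2)) (hA : 𝔥 A = 1) :
    ∃ B C : EuclideanSpace ℝ (Fin 2),
      𝔥 B = 1 ∧ 𝔥 C = 1 ∧
      gradient 𝔥 A + gradient 𝔥 B + gradient 𝔥 C = 0 ∧
      ∀ B' C' : EuclideanSpace ℝ (Fin 2), 𝔥 B' = 1 → 𝔥 C' = 1 →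
        gradient 𝔥 A + gradient 𝔥 B' + gradient 𝔥 C' = 0 →
        ({B', C'} : Set (EuclideanSpace ℝ (Fin 2))) = {B, C} := by

  have hne : ∃ u : E2, 𝔥 u = 1 := ⟨A, hA⟩
  set N : E2 → ℝ := st6N 𝔥 with hN
  have hsb : ∀ {a b : E2} {t : ℝ}, N a ≤ 1 → N b ≤ 1 → a ≠ b → t ∈ Set.Ioo (0:ℝ) 1 →
      N (t • a + (1 - t) • b) < 1 :=
    fun ha hb hab ht => st6_strictball h_cont h_homog h_pos h_C1 hne ha hb hab ht
  have Neven : ∀ x : E2, N (-x) = N x :=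
    fun x => st6_Neven h_cont h_homog h_symm h_pos hne x
  have Nhom : ∀ {c : ℝ}, 0 ≤ c → ∀ x : E2, N (c • x) = c * N x :=
    fun hc x => st6_Nhom h_cont h_homog h_pos hne hc x
  have hN0 : N 0 = 0 := st6_Nzero h_cont h_homog h_pos hne
  set p : E2 := gradient 𝔥 A with hp_def
  have hp : N p = 1 := st6_Ngrad_one h_cont h_homog h_pos h_C1 h_strict hA
  obtain ⟨q, r, hq, hr, hqr⟩ :=
    st6_exists (st6_Ncont h_cont h_homog h_pos hne) Nhom
      (fun hx => st6_Npos h_cont h_homog h_pos hne hx) Neven hp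
  obtain ⟨B, hB, hgB⟩ := st6_Nsurj h_cont h_homog h_pos h_C1 hne hq
  obtain ⟨C, hC, hgC⟩ := st6_Nsurj h_cont h_homog h_pos h_C1 hne hr
  refine ⟨B, C, hB, hC, ?_, ?_⟩
  · show p + gradient 𝔥 B + gradient 𝔥 C = 0
    rw [hgB, hgC]
    linear_combination (norm := module) hqr
  · intro B' C' hB' hC' hsum'
    set q' : E2 := gradient 𝔥 B' with hq'_def
    set r' : E2 := gradient 𝔥 C' with hr'_def
    have hq' : N q' = 1 := st6_Ngrad_one h_cont h_homog h_pos h_C1 h_strict hB'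
    have hr' : N r' = 1 := st6_Ngrad_one h_cont h_homog h_pos h_C1 h_strict hC'
    have hsum'' : q' + r' = -p := by
      have : p + (q' + r') = 0 := by rw [← add_assoc]; exact hsum'
      linear_combination (norm := module) this
    have hpairs := st6_pairs hsb Neven hN0 hp hq hr hqr hq' hr' hsum''
    rw [Set.pair_eq_pair_iff] at hpairs
    rcases hpairs with ⟨h1, h2⟩ | ⟨h1, h2⟩
    · have hBB : B' = B := st6_inj h_homog h_C1 h_strict hB' hB (by rw [← hq'_def, h1, ← hgB])
      have hCC : C' = C := st6_inj h_homog h_C1 h_strict hC' hC (by rw [← hr'_def, h2, ← hgC])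
      rw [hBB, hCC]
    · have hBC : B' = C := st6_inj h_homog h_C1 h_strict hB' hC (by rw [← hq'_def, h1, ← hgC])
      have hCB : C' = B := st6_inj h_homog h_C1 h_strict hC' hB (by rw [← hr'_def, h2, ← hgB])
      rw [hBC, hCB, Set.pair_comm]
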